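/- Let P, Q : [0,1] → ℝ^d be continuous curves, let ε > 0, and let σ, τ : [0,1] → [0,1] be continuous nondecreasing surjections such that sup_{t ∈ [0,1]} dist(P(σ(t)), Q(τ(t))) ≤ ε. Then for all 0 ≤ u ≤ v ≤ 1, the Fréchet distance between the subcurve of P on the parameter interval [σ(u), σ(v)] and the subcurve of Q on the parameter interval [τ(u), τ(v)] (each reparametrized affinely onto [0,1]; a degenerate interval gives a constant curve) is at most ε. -/

import Mathlib

open Set Metric

noncomputable section

/-- Euclidean space ℝ^d. -/
abbrev Euc (d : ℕ) := EuclideanSpace ℝ (Fin d)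

/-- A pair of continuous nondecreasing surjections from `[0,1]` onto `[0,1]`. -/
def IsReparamPair (σ τ : ℝ → ℝ) : Prop :=
  ContinuousOn σ (Set.Icc 0 1) ∧ MonotoneOn σ (Set.Icc 0 1) ∧
    σ '' Set.Icc 0 1 = Set.Icc 0 1 ∧
  ContinuousOn τ (Set.Icc 0 1) ∧ MonotoneOn τ (Set.Icc 0 1) ∧
    τ '' Set.Icc 0 1 = Set.Icc 0 1

/-- The Fréchet distance between two curves `[0,1] → ℝ^d`. -/
noncomputable def frechetDist {d : ℕ} (P Q : ℝ → Euc d) : ℝ :=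
  sInf {r : ℝ | ∃ σ τ : ℝ → ℝ, IsReparamPair σ τ ∧
    r = ⨆ t : Set.Icc (0 : ℝ) 1, dist (P (σ t)) (Q (τ t))}

/-- The polygonal curve with vertices `q 0, …, q n` (so `n` segments),
linearly parametrizing the segment from `q j` to `q (j+1)` on `[j/n, (j+1)/n]`. -/
noncomputable def polyCurve {d : ℕ} (q : ℕ → Euc d) (n : ℕ) (t : ℝ) : Euc d :=
  let j : ℕ := min (⌊t * n⌋.toNat) (n - 1)
  (1 - (t * n - j)) • q j + (t * n - j) • q (j + 1)

/-- The segment from `a` to `b` as a curve on `[0,1]`. -/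
def segCurve {d : ℕ} (a b : Euc d) (t : ℝ) : Euc d := (1 - t) • a + t • b

lemma reparam_sub (σ : ℝ → ℝ) (hc : ContinuousOn σ (Set.Icc 0 1))
    (hm : MonotoneOn σ (Set.Icc 0 1)) (u v : ℝ) (hu : 0 ≤ u) (huv : u ≤ v) (hv : v ≤ 1) :
    ∃ σ' : ℝ → ℝ, ContinuousOn σ' (Set.Icc 0 1) ∧ MonotoneOn σ' (Set.Icc 0 1) ∧
      σ' '' Set.Icc 0 1 = Set.Icc 0 1 ∧
      ∀ t ∈ Set.Icc (0:ℝ) 1, (1 - σ' t) * σ u + σ' t * σ v = σ ((1 - t) * u + t * v) := by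
  have huI : u ∈ Set.Icc (0:ℝ) 1 := ⟨hu, le_trans huv hv⟩
  have hvI : v ∈ Set.Icc (0:ℝ) 1 := ⟨le_trans hu huv, hv⟩
  have hfmem : ∀ t ∈ Set.Icc (0:ℝ) 1, (1 - t) * u + t * v ∈ Set.Icc u v := by
    intro t ht
    exact ⟨by nlinarith [ht.1, ht.2], by nlinarith [ht.1, ht.2]⟩
  have hfI : ∀ t ∈ Set.Icc (0:ℝ) 1, (1 - t) * u + t * v ∈ Set.Icc (0:ℝ) 1 := by
    intro t ht
    have := hfmem t ht
    exact ⟨le_trans hu this.1, le_trans this.2 hv⟩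
  by_cases hσ : σ u = σ v
  · refine ⟨id, continuousOn_id, monotoneOn_id, Set.image_id _, ?_⟩
    intro t ht
    have h1 : σ ((1 - t) * u + t * v) = σ u := by
      have hf := hfmem t ht
      have hfi := hfI t ht
      have h2 : σ u ≤ σ ((1 - t) * u + t * v) := hm huI hfi hf.1
      have h3 : σ ((1 - t) * u + t * v) ≤ σ v := hm hfi hvI hf.2
      exact le_antisymm (hσ ▸ h3) h2
    rw [h1]
    simp only [id_eq]
    rw [← hσ]
    ring
  · have hlt : σ u < σ v := lt_of_le_of_ne (hm huI hvI huv) hσ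
    have hcpos : (0:ℝ) < σ v - σ u := by linarith
    set g : ℝ → ℝ := fun t => (σ ((1 - t) * u + t * v) - σ u) / (σ v - σ u) with hg
    have hgc : ContinuousOn g (Set.Icc 0 1) := by
      apply ContinuousOn.div_const
      exact (hc.comp (by fun_prop) hfI).sub continuousOn_const
    have hgm : MonotoneOn g (Set.Icc 0 1) := by
      intro t1 h1 t2 h2 h12
      have hs : σ ((1 - t1) * u + t1 * v) ≤ σ ((1 - t2) * u + t2 * v) := by
        apply hm (hfI t1 h1) (hfI t2 h2)
        nlinarith
      simp only [hg]
      gcongr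
    have hg0 : g 0 = 0 := by simp [hg]
    have hg1 : g 1 = 1 := by
      simp only [hg]
      rw [show (1 - (1:ℝ)) * u + 1 * v = v by ring]
      field_simp
    have hbound : ∀ t ∈ Set.Icc (0:ℝ) 1, g t ∈ Set.Icc (0:ℝ) 1 := by
      intro t ht
      have h2 : σ u ≤ σ ((1 - t) * u + t * v) := hm huI (hfI t ht) (hfmem t ht).1
      have h3 : σ ((1 - t) * u + t * v) ≤ σ v := hm (hfI t ht) hvI (hfmem t ht).2
      constructor
      · exact div_nonneg (by linarith) (le_of_lt hcpos)
      · rw [div_le_one hcpos]; linarith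
    refine ⟨g, hgc, hgm, ?_, ?_⟩
    · apply Set.Subset.antisymm
      · rintro x ⟨t, ht, rfl⟩
        exact hbound t ht
      · have := intermediate_value_Icc (zero_le_one) hgc
        rw [hg0, hg1] at this
        exact this
    · intro t ht
      simp only [hg]
      field_simp
      ring

/-- If `σ, τ` witness a Fréchet matching of `P` and `Q` within `ε`, then corresponding
subcurves of `P` and `Q` (reparametrized affinely onto `[0,1]`) are also within Fréchet
distance `ε`. -/
theorem frechetDist_subcurves_le {d : ℕ} (P Q : ℝ → Euc d)
    (hP : ContinuousOn P (Set.Icc 0 1)) (hQ : ContinuousOn Q (Set.Icc 0 1))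
    (ε : ℝ) (hε : 0 < ε) (σ τ : ℝ → ℝ) (hστ : IsReparamPair σ τ)
    (hsup : ⨆ t : Set.Icc (0 : ℝ) 1, dist (P (σ t)) (Q (τ t)) ≤ ε) :
    ∀ u v : ℝ, 0 ≤ u → u ≤ v → v ≤ 1 →
      frechetDist (fun t => P ((1 - t) * σ u + t * σ v))
        (fun t => Q ((1 - t) * τ u + t * τ v)) ≤ ε := by
  intro u v hu huv hv
  obtain ⟨hσc, hσm, hσs, hτc, hτm, hτs⟩ := hστ
  -- pointwise bound
  have hσmaps : Set.MapsTo σ (Set.Icc 0 1) (Set.Icc 0 1) :=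
    fun x hx => hσs ▸ Set.mem_image_of_mem σ hx
  have hτmaps : Set.MapsTo τ (Set.Icc 0 1) (Set.Icc 0 1) :=
    fun x hx => hτs ▸ Set.mem_image_of_mem τ hx
  have hptwise : ∀ s ∈ Set.Icc (0:ℝ) 1, dist (P (σ s)) (Q (τ s)) ≤ ε := by
    intro s hs
    have hcont : ContinuousOn (fun t => dist (P (σ t)) (Q (τ t))) (Set.Icc 0 1) :=
      by have := continuous_dist.comp_continuousOn
           (((hP.comp hσc hσmaps)).prodMk (hQ.comp hτc hτmaps)); exact this
    have hbdd : BddAbove (Set.range fun t : Set.Icc (0:ℝ) 1 => dist (P (σ t)) (Q (τ t))) := by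
      have h := (isCompact_Icc.image_of_continuousOn hcont).bddAbove
      rw [← Set.range_restrict] at h
      exact h
    calc dist (P (σ s)) (Q (τ s))
        ≤ ⨆ t : Set.Icc (0:ℝ) 1, dist (P (σ t)) (Q (τ t)) := le_ciSup hbdd ⟨s, hs⟩
      _ ≤ ε := hsup
  obtain ⟨σ', hσ'c, hσ'm, hσ's, hσ'id⟩ := reparam_sub σ hσc hσm u v hu huv hv
  obtain ⟨τ', hτ'c, hτ'm, hτ's, hτ'id⟩ := reparam_sub τ hτc hτm u v hu huv hv
  set r : ℝ := ⨆ t : Set.Icc (0:ℝ) 1,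
      dist ((fun t => P ((1 - t) * σ u + t * σ v)) (σ' t))
           ((fun t => Q ((1 - t) * τ u + t * τ v)) (τ' t)) with hr
  have hrle : r ≤ ε := by
    rw [hr]
    apply Real.iSup_le _ (le_of_lt hε)
    rintro ⟨t, ht⟩
    simp only
    rw [hσ'id t ht, hτ'id t ht]
    apply hptwise
    have hfI : (1 - t) * u + t * v ∈ Set.Icc (0:ℝ) 1 := by
      constructor
      · nlinarith [ht.1, ht.2]
      · nlinarith [ht.1, ht.2]
    exact hfI
  refine le_trans (csInf_le ?_ ⟨σ', τ', ⟨hσ'c, hσ'm, hσ's, hτ'c, hτ'm, hτ's⟩, hr⟩) hrle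
  refine ⟨0, ?_⟩
  rintro x ⟨σ₁, τ₁, _, rfl⟩
  exact Real.iSup_nonneg fun t => dist_nonneg

end
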